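/- Let $N \ge 2$ and $H = \mathbb{C}^N$ with standard basis $(e_i)_{i=1}^N$. For a non-crossing pair partition $p$ of $\{1,\dots,k\}$ (with $k$ even), define the vector $T_p = \sum_{i_1,\dots,i_k=1}^N \delta^p_i \, e_{i_1} \otimes \cdots \otimes e_{i_k} \in H^{\otimes k}$, where $\delta^p_i = 1$ if $i_l = i_m$ for every pair $\{l,m\} \in p$ and $0$ otherwise. Then the family $(T_p)_{p \in NC_2(k)}$ indexed by all non-crossing pair partitions of $\{1,\dots,k\}$ is linearly independent. -/

import Mathlib

/-- A fixed-point-free involution `p` of `Fin k` encodes a pair partition of `{1,…,k}`;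
the non-crossing condition says there are no pairs `{a,b}`, `{c,d}` with `a < c < b < d`. -/
def IsNC2 {k : ℕ} (p : Fin k → Fin k) : Prop :=
  (∀ l, p (p l) = l) ∧ (∀ l, p l ≠ l) ∧
    ∀ a c : Fin k, a < c → c < p a → p a < p c → False

/-- The vector `T_p ∈ (ℂ^N)^{⊗ k}`, modelled as a function on index tuples:
its coordinate at `(i_1,…,i_k)` is `1` if the tuple is constant on the blocks of `p`,
and `0` otherwise. -/
noncomputable def Tvec {k N : ℕ} (p : Fin k → Fin k) : (Fin k → Fin N) → ℂ :=
  fun i => if ∀ l, i (p l) = i l then 1 else 0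

namespace NC2Aux

variable {k : ℕ}

/-- Interval lemma: for a non-crossing matching, partners of points inside an arc stay inside. -/
lemma mem_interval {p : Fin k → Fin k} (hp : IsNC2 p) {a x : Fin k}
    (h1 : a < x) (h2 : x < p a) : a < p x ∧ p x < p a := by
  obtain ⟨hinv, hfpf, hnc⟩ := hp
  have hxa : p x ≠ a := by
    intro h
    have h' := congrArg p h
    rw [hinv] at h'
    exact h2.ne h'
  have hxpa : p x ≠ p a := by
    intro h
    have h' := congrArg p h
    rw [hinv, hinv] at h'
    exact h1.ne' h'
  constructor
  · rcases lt_trichotomy a (p x) with h | h | h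
    · exact h
    · exact absurd h.symm hxa
    · exact (hnc (p x) a h (by rw [hinv]; exact h1) (by rw [hinv]; exact h2)).elim
  · rcases lt_trichotomy (p x) (p a) with h | h | h
    · exact h
    · exact absurd h hxpa
    · exact (hnc a x h1 h2 h).elim

lemma even_card_of_inv {s : Finset (Fin k)} {f : Fin k → Fin k}
    (hmem : ∀ x ∈ s, f x ∈ s) (hinv : ∀ x, f (f x) = x) (hne : ∀ x, f x ≠ x) :
    Even s.card := by
  classical
  have hsplit := Finset.card_filter_add_card_filter_not
      (s := s) (p := fun x => x < f x)
  have hbij : (s.filter fun x => x < f x).card = (s.filter fun x => ¬ x < f x).card := by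
    apply Finset.card_bij' (fun a _ => f a) (fun a _ => f a)
    · intro a ha
      rw [Finset.mem_filter] at ha ⊢
      exact ⟨hmem a ha.1, by rw [hinv]; exact lt_asymm ha.2⟩
    · intro a ha
      rw [Finset.mem_filter] at ha ⊢
      refine ⟨hmem a ha.1, ?_⟩
      rw [hinv]
      exact (not_lt.mp ha.2).lt_of_ne (hne a)
    · intro a _; exact hinv a
    · intro a _; exact hinv a
  exact ⟨(s.filter fun x => x < f x).card, by omega⟩

lemma odd_arc {p : Fin k → Fin k} (hp : IsNC2 p) {a : Fin k} (h : a < p a) :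
    (p a).val % 2 ≠ a.val % 2 := by
  classical
  have hmem : ∀ x ∈ Finset.Ioo a (p a), p x ∈ Finset.Ioo a (p a) := by
    intro x hx
    rw [Finset.mem_Ioo] at hx ⊢
    exact mem_interval hp hx.1 hx.2
  have heven := even_card_of_inv hmem hp.1 hp.2.1
  rw [Fin.card_Ioo] at heven
  obtain ⟨m, hm⟩ := heven
  have hlt : a.val < (p a).val := h
  omega

/-- openers of `p` located at positions `≤ t`. -/
def opS (p : Fin k → Fin k) (t : ℕ) : Finset (Fin k) :=
  Finset.univ.filter fun l : Fin k => l < p l ∧ l.val ≤ t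
/-- closers of `p` located at positions `≤ t`. -/
def clS (p : Fin k → Fin k) (t : ℕ) : Finset (Fin k) :=
  Finset.univ.filter fun l : Fin k => p l < l ∧ l.val ≤ t
/-- arcs of `p` covering the gap `(t, t+1)`, recorded by their opener. -/
def XgS (p : Fin k → Fin k) (t : ℕ) : Finset (Fin k) :=
  Finset.univ.filter fun l : Fin k => l.val ≤ t ∧ t < (p l).val

/-- the measure: total number of (gap, covering arc) incidences. -/
def mu (p : Fin k → Fin k) : ℕ := ∑ t ∈ Finset.range k, (XgS p t).card

lemma opS_card_eq {p : Fin k → Fin k} (hinv : ∀ l, p (p l) = l) (t : ℕ) :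
    (opS p t).card = (clS p t).card + (XgS p t).card := by
  classical
  have hsplit := Finset.card_filter_add_card_filter_not
      (s := opS p t) (p := fun l => (p l).val ≤ t)
  have h1 : ((opS p t).filter fun l => ¬ (p l).val ≤ t) = XgS p t := by
    ext x
    simp only [opS, XgS, Finset.mem_filter, Finset.mem_univ, true_and]
    constructor
    · rintro ⟨⟨_, hx2⟩, hx3⟩; exact ⟨hx2, by omega⟩
    · rintro ⟨hx1, hx2⟩
      have hxlt : x < p x := by rw [Fin.lt_def]; omega
      exact ⟨⟨hxlt, hx1⟩, by omega⟩
  have h2 : (((opS p t).filter fun l => (p l).val ≤ t)).card = (clS p t).card := by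
    apply Finset.card_bij' (fun a _ => p a) (fun a _ => p a)
    · intro a ha
      simp only [opS, Finset.mem_filter, Finset.mem_univ, true_and] at ha
      simp only [clS, Finset.mem_filter, Finset.mem_univ, true_and]
      exact ⟨by rw [hinv]; exact ha.1.1, ha.2⟩
    · intro a ha
      simp only [clS, Finset.mem_filter, Finset.mem_univ, true_and] at ha
      simp only [opS, Finset.mem_filter, Finset.mem_univ, true_and]
      have hval : (p a).val < a.val := ha.1
      refine ⟨⟨by rw [hinv]; exact ha.1, by omega⟩, by rw [hinv]; exact ha.2⟩
    · intro a _; exact hinv a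
    · intro a _; exact hinv a
  rw [h1] at hsplit
  omega

lemma opS_card_le {p q : Fin k → Fin k} (hqinv : ∀ l, q (q l) = l)
    (hmix : ∀ l, l < p l → p (q l) < q l) (t : ℕ) :
    (opS p t).card ≤ (clS p t).card + (XgS q t).card := by
  classical
  have hsplit := Finset.card_filter_add_card_filter_not
      (s := opS p t) (p := fun l => (q l).val ≤ t)
  have h1 : (((opS p t).filter fun l => (q l).val ≤ t)).card ≤ (clS p t).card := by
    apply Finset.card_le_card_of_injOn q
    · intro l hl
      simp only [opS, Finset.mem_coe, Finset.mem_filter, Finset.mem_univ, true_and] at hl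
      simp only [clS, Finset.coe_filter, Set.mem_setOf_eq, Finset.mem_univ, true_and]
      exact ⟨hmix l hl.1.1, hl.2⟩
    · intro x _ y _ hxy
      have := congrArg q hxy
      rwa [hqinv, hqinv] at this
  have h2 : (((opS p t).filter fun l => ¬ (q l).val ≤ t)).card ≤ (XgS q t).card := by
    apply Finset.card_le_card
    intro l hl
    simp only [opS, Finset.mem_filter, Finset.mem_univ, true_and] at hl
    simp only [XgS, Finset.mem_filter, Finset.mem_univ, true_and]
    exact ⟨hl.1.2, by omega⟩
  omega

lemma closer_lt {p q : Fin k → Fin k} (hqinv : ∀ l, q (q l) = l)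
    (hmix : ∀ l, l < p l → p (q l) < q l) {c : Fin k}
    (heq : (opS p c.val).card = (clS p c.val).card + (XgS q c.val).card)
    (hc : p c < c) : q c < c := by
  classical
  set t := c.val with ht
  set A := (opS p t).filter (fun l => (q l).val ≤ t) with hA
  set B := (opS p t).filter (fun l => ¬ (q l).val ≤ t) with hB
  have hAB : A.card + B.card = (opS p t).card :=
    Finset.card_filter_add_card_filter_not _
  have hmaps : ∀ l ∈ A, q l ∈ clS p t := by
    intro l hl
    simp only [hA, opS, Finset.mem_filter, Finset.mem_univ, true_and] at hl
    simp only [clS, Finset.mem_filter, Finset.mem_univ, true_and]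
    exact ⟨hmix l hl.1.1, hl.2⟩
  have hAle : A.card ≤ (clS p t).card := by
    apply Finset.card_le_card_of_injOn q hmaps
    intro x _ y _ hxy
    have := congrArg q hxy
    rwa [hqinv, hqinv] at this
  have hBle : B.card ≤ (XgS q t).card := by
    apply Finset.card_le_card
    intro l hl
    simp only [hB, opS, Finset.mem_filter, Finset.mem_univ, true_and] at hl
    simp only [XgS, Finset.mem_filter, Finset.mem_univ, true_and]
    exact ⟨hl.1.2, by omega⟩
  have hcard : (clS p t).card ≤ A.card := by omega
  have hsurj := Finset.surj_on_of_inj_on_of_card_le (s := A) (t := clS p t)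
      (fun a _ => q a) hmaps
      (fun x y hx hy hxy => by
        have := congrArg q hxy
        rwa [hqinv, hqinv] at this) hcard
  have hcmem : c ∈ clS p t := by
    simp only [clS, Finset.mem_filter, Finset.mem_univ, true_and]
    exact ⟨hc, le_refl _⟩
  obtain ⟨l, hl, hbl⟩ := hsurj c hcmem
  have hqc : q c = l := by rw [hbl, hqinv]
  simp only [hA, opS, Finset.mem_filter, Finset.mem_univ, true_and] at hl
  have hlc : l ≠ c := by
    intro h
    rw [h] at hl
    exact absurd hl.1.1 (lt_asymm hc)
  have hlval : l.val ≠ c.val := fun h => hlc (Fin.ext h)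
  rw [hqc, Fin.lt_def]
  have := hl.1.2
  omega

/-- Two non-crossing matchings with the same set of openers coincide. -/
lemma helper {p q : Fin k → Fin k} (hp : IsNC2 p) (hq : IsNC2 q)
    (hal : ∀ l, l < p l ↔ l < q l) {a : Fin k} (ha : a < p a) (hlt : p a < q a) :
    ∃ d : Fin k, (d < p d ∧ p d ≠ q d) ∧
      max (p d).val (q d).val < max (p a).val (q a).val := by
  have hqd : q (p a) < p a := by
    have h1 : ¬ p a < p (p a) := by rw [hp.1]; exact lt_asymm ha
    have h2 : ¬ p a < q (p a) := fun h => h1 ((hal (p a)).mpr h)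
    exact (not_lt.mp h2).lt_of_ne (hq.2.1 (p a))
  set d := q (p a) with hd
  have hqdval : q d = p a := by rw [hd, hq.1]
  have hda : a < d := by
    rcases lt_trichotomy a d with h | h | h
    · exact h
    · exfalso
      have hqa : q a = p a := (congrArg q h).trans hqdval
      exact absurd hlt (by rw [hqa]; exact lt_irrefl _)
    · exact (hq.2.2 d a h (by rw [hqdval]; exact ha) (by rw [hqdval]; exact hlt)).elim
  have hdo : d < q d := by rw [hqdval]; exact hqd
  have hdop : d < p d := (hal d).mpr hdo
  obtain ⟨he1, he2⟩ := mem_interval hp hda hqd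
  refine ⟨d, ⟨hdop, ?_⟩, ?_⟩
  · rw [hqdval]; exact ne_of_lt he2
  · rw [hqdval]
    have h1 : (p d).val < (p a).val := he2
    have h2 : (p a).val < (q a).val := hlt
    rw [Nat.max_eq_right h1.le, Nat.max_eq_right h2.le]
    exact h2

lemma aligned_unique {p q : Fin k → Fin k} (hp : IsNC2 p) (hq : IsNC2 q)
    (hal : ∀ l, l < p l ↔ l < q l) : p = q := by
  classical
  by_contra hne
  have hSne : (Finset.univ.filter fun a : Fin k => a < p a ∧ p a ≠ q a).Nonempty := by
    obtain ⟨l, hl⟩ := Function.ne_iff.mp hne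
    rcases lt_trichotomy l (p l) with h | h | h
    · exact ⟨l, by simp only [Finset.mem_filter, Finset.mem_univ, true_and]; exact ⟨h, hl⟩⟩
    · exact absurd h.symm (hp.2.1 l)
    · refine ⟨p l, ?_⟩
      simp only [Finset.mem_filter, Finset.mem_univ, true_and]
      refine ⟨by rw [hp.1]; exact h, ?_⟩
      rw [hp.1]
      intro hcontra
      apply hl
      have := congrArg q hcontra
      rw [hq.1] at this
      exact this.symm
  obtain ⟨a, haS, hmin⟩ := Finset.exists_min_image _ (fun x => max (p x).val (q x).val) hSne
  simp only [Finset.mem_filter, Finset.mem_univ, true_and] at haS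
  rcases lt_trichotomy (p a) (q a) with h | h | h
  · obtain ⟨d, hdS, hdlt⟩ := helper hp hq hal haS.1 h
    have := hmin d (by simp only [Finset.mem_filter, Finset.mem_univ, true_and]; exact hdS)
    omega
  · exact haS.2 h
  · have haq : a < q a := (hal a).mp haS.1
    obtain ⟨d, hdS, hdlt⟩ := helper hq hp (fun l => (hal l).symm) haq h
    have hdmem : d < p d ∧ p d ≠ q d := ⟨(hal d).mpr hdS.1, fun hh => hdS.2 hh.symm⟩
    have hge := hmin d (by simp only [Finset.mem_filter, Finset.mem_univ, true_and]; exact hdmem)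
    rw [Nat.max_comm ((q d).val), Nat.max_comm ((q a).val)] at hdlt
    omega

/-- Key triangularity lemma. -/
lemma key {p q : Fin k → Fin k} (hp : IsNC2 p) (hq : IsNC2 q)
    (hmixo : ∀ l, l < p l → p (q l) < q l) :
    q = p ∨ mu p < mu q := by
  classical
  have h2 := fun t => opS_card_eq (p := p) hp.1 t
  have h1 := fun t => opS_card_le hq.1 hmixo t
  have hle : ∀ t, (XgS p t).card ≤ (XgS q t).card := fun t => by
    have := h1 t; have := h2 t; omega
  by_cases hqp : q = p
  · exact Or.inl hqp
  right
  have hex : ∃ t ∈ Finset.range k, (XgS p t).card < (XgS q t).card := by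
    by_contra hcon
    push_neg at hcon
    have heq : ∀ c : Fin k, (opS p c.val).card = (clS p c.val).card + (XgS q c.val).card := by
      intro c
      have h3 := hcon c.val (Finset.mem_range.mpr c.isLt)
      have := h1 c.val; have := h2 c.val; have := hle c.val; omega
    have hcl : ∀ c : Fin k, p c < c → q c < c := fun c hc =>
      closer_lt hq.1 hmixo (heq c) hc
    have hal : ∀ l, l < p l ↔ l < q l := by
      intro l
      constructor
      · intro hl
        have h4 : p (q l) < q l := hmixo l hl
        have h5 : q (q l) < q l := hcl _ h4
        rwa [hq.1] at h5
      · intro hl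
        by_contra hnl
        have hcl' : p l < l := (not_lt.mp hnl).lt_of_ne (hp.2.1 l)
        have := hcl l hcl'
        exact absurd hl (not_lt.mpr this.le)
    exact hqp (aligned_unique hp hq hal).symm
  exact Finset.sum_lt_sum (fun t _ => hle t) hex

/-- The test tuple associated with `p`. -/
def ptv (N : ℕ) (hN : 2 ≤ N) (p : Fin k → Fin k) (l : Fin k) : Fin N :=
  ⟨(l.val + if l < p l then 1 else 0) % 2,
    lt_of_lt_of_le (Nat.mod_lt _ (by omega)) hN⟩

lemma ptv_const {N : ℕ} (hN : 2 ≤ N) {p : Fin k → Fin k} (hp : IsNC2 p) (l : Fin k) :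
    ptv N hN p (p l) = ptv N hN p l := by
  have hne := hp.2.1 l
  rcases lt_trichotomy l (p l) with h | h | h
  · have hodd := odd_arc hp h
    have h2 : ¬ p l < p (p l) := by rw [hp.1]; exact lt_asymm h
    apply Fin.ext
    simp only [ptv, if_pos h, if_neg h2]
    omega
  · exact absurd h.symm hne
  · have h2 : p l < p (p l) := by rw [hp.1]; exact h
    have hodd := odd_arc hp h2
    rw [hp.1] at hodd
    apply Fin.ext
    simp only [ptv, if_pos h2, if_neg (lt_asymm h)]
    omega

lemma ptv_mix {N : ℕ} (hN : 2 ≤ N) {p q : Fin k → Fin k} (hp : IsNC2 p) (hq : IsNC2 q)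
    (hcond : ∀ l, ptv N hN p (q l) = ptv N hN p l) :
    ∀ l, l < p l → p (q l) < q l := by
  intro l hl
  have hodd : (q l).val % 2 ≠ l.val % 2 := by
    rcases lt_trichotomy l (q l) with h | h | h
    · exact odd_arc hq h
    · exact absurd h.symm (hq.2.1 l)
    · have h2 : q l < q (q l) := by rw [hq.1]; exact h
      have := odd_arc hq h2
      rw [hq.1] at this
      omega
  have hc := congrArg Fin.val (hcond l)
  simp only [ptv] at hc
  rw [if_pos hl] at hc
  by_cases h2 : q l < p (q l)
  · rw [if_pos h2] at hc
    exfalso; omega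
  · exact (not_lt.mp h2).lt_of_ne (hp.2.1 (q l))

end NC2Aux

theorem nc2_vectors_linearIndependent (N k : ℕ) (hN : 2 ≤ N) (hk : Even k) :
    LinearIndependent ℂ (fun p : { p : Fin k → Fin k // IsNC2 p } =>
      (Tvec p.1 : (Fin k → Fin N) → ℂ)) := by
  classical
  open NC2Aux in
  rw [linearIndependent_iff']
  intro s g hsum i hi
  by_contra hgi
  obtain ⟨p0, hp0F, hmax⟩ := (s.filter fun j => g j ≠ 0).exists_max_image
      (fun j => NC2Aux.mu j.1) ⟨i, Finset.mem_filter.mpr ⟨hi, hgi⟩⟩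
  rw [Finset.mem_filter] at hp0F
  have happ := congrFun hsum (NC2Aux.ptv N hN p0.1)
  rw [Finset.sum_apply, Pi.zero_apply] at happ
  have hoff : ∀ j ∈ s, j ≠ p0 →
      (g j • Tvec j.1) (NC2Aux.ptv N hN p0.1) = 0 := by
    intro j hj hjne
    by_cases hgj : g j = 0
    · simp [hgj]
    · have hTj : Tvec j.1 (NC2Aux.ptv N hN p0.1) = 0 := by
        unfold Tvec
        rw [if_neg]
        intro hcond
        have hmixo := NC2Aux.ptv_mix hN p0.2 j.2 hcond
        rcases NC2Aux.key p0.2 j.2 hmixo with h | h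
        · exact hjne (Subtype.ext h)
        · have := hmax j (Finset.mem_filter.mpr ⟨hj, hgj⟩)
          omega
      simp [hTj]
  rw [Finset.sum_eq_single_of_mem p0 hp0F.1 hoff] at happ
  have hdiag : Tvec p0.1 (NC2Aux.ptv N hN p0.1) = 1 := by
    unfold Tvec
    rw [if_pos (NC2Aux.ptv_const hN p0.2)]
  rw [Pi.smul_apply, hdiag, smul_eq_mul, mul_one] at happ
  exact hp0F.2 happ
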